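/- arXiv:0801.3306 — 2 statements merged into one kernel-verified Lean document; each statement's English description precedes it below -/
import Mathlib

section
/- Let G be an Eulerian digraph with sink s. A stable chip configuration σ on G is recurrent if and only if every nonempty induced subgraph of G∖s is ample for σ. -/
/-!
Characterization of recurrent configurations on an Eulerian digraph with sink
(Holroyd et al., Lemma 4.2): a stable configuration σ is recurrent iff every nonempty
induced subgraph of G∖s is ample for σ.
-/

/-- The out-degree of a vertex. -/
def outdeg {V E : Type} [Fintype E] [DecidableEq V] (tail : E → V) (v : V) : ℕ :=
  (Finset.univ.filter (fun e => tail e = v)).card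

/-- The number of edges from `v` to `w`. -/
def numEdges {V E : Type} [Fintype E] [DecidableEq V] (tail head : E → V) (v w : V) : ℕ :=
  (Finset.univ.filter (fun e => tail e = v ∧ head e = w)).card

/-- The vertices other than the (global) sink `s`. -/
abbrev Vne {V : Type} (s : V) : Type := {v : V // v ≠ s}

/-- Firing the vertex `v`. -/
def fire {V E : Type} [Fintype E] [DecidableEq V] {s : V} (tail head : E → V)
    (σ : Vne s → ℕ) (v : Vne s) : Vne s → ℕ :=
  fun w =>
    if w = v then σ v + numEdges tail head v.1 v.1 - outdeg tail v.1
    else σ w + numEdges tail head v.1 w.1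

/-- A (non-sink) vertex is active when it has at least as many chips as outgoing edges. -/
def Active {V E : Type} [Fintype E] [DecidableEq V] {s : V} (tail : E → V)
    (σ : Vne s → ℕ) (v : Vne s) : Prop :=
  outdeg tail v.1 ≤ σ v

/-- The result of firing the vertices in the list `l` in order, starting from `σ`. -/
def fireList {V E : Type} [Fintype E] [DecidableEq V] {s : V} (tail head : E → V)
    (σ : Vne s → ℕ) : List (Vne s) → (Vne s → ℕ)
  | [] => σ
  | v :: l => fireList tail head (fire tail head σ v) l

/-- The firing sequence `l` is legal from `σ`. -/
def Legal {V E : Type} [Fintype E] [DecidableEq V] {s : V} (tail head : E → V)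
    (σ : Vne s → ℕ) : List (Vne s) → Prop
  | [] => True
  | v :: l => Active tail σ v ∧ Legal tail head (fire tail head σ v) l

/-- A configuration is stable when no non-sink vertex is active. -/
def Stable {V E : Type} [Fintype E] [DecidableEq V] {s : V} (tail : E → V)
    (σ : Vne s → ℕ) : Prop :=
  ∀ v, σ v < outdeg tail v.1

/-- `σ` is accessible: from any chip configuration `ζ` one can obtain `σ` by adding
some chips and then performing a legal sequence of firings of active vertices. -/
def Accessible {V E : Type} [Fintype E] [DecidableEq V] {s : V} (tail head : E → V)
    (σ : Vne s → ℕ) : Prop :=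
  ∀ ζ : Vne s → ℕ, ∃ (β : Vne s → ℕ) (l : List (Vne s)),
    Legal tail head (fun v => ζ v + β v) l ∧ fireList tail head (fun v => ζ v + β v) l = σ

/-- A chip configuration is recurrent when it is both stable and accessible. -/
def Recurrent {V E : Type} [Fintype E] [DecidableEq V] {s : V} (tail head : E → V)
    (σ : Vne s → ℕ) : Prop :=
  Stable tail σ ∧ Accessible tail head σ

/-- The in-degree of a vertex. -/
def indeg {V E : Type} [Fintype E] [DecidableEq V] (head : E → V) (v : V) : ℕ :=
  (Finset.univ.filter (fun e => head e = v)).card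

/-- The in-degree of `u` within the induced subgraph on the vertex set `A`:
the number of edges with head `u` whose tail lies in `A`. -/
def indegIn {V E : Type} [Fintype E] [DecidableEq V] (tail head : E → V)
    (A : Finset V) (u : V) : ℕ :=
  (Finset.univ.filter (fun e => head e = u ∧ tail e ∈ A)).card


namespace AmpleAux
set_option linter.unusedSectionVars false

variable {V E : Type} [Fintype V] [DecidableEq V] [Fintype E]

lemma sum_numEdges_eq_outdeg (tail head : E → V) (v : V) :
    ∑ w : V, numEdges tail head v w = outdeg tail v := by
  rw [outdeg, Finset.card_eq_sum_card_fiberwise (f := head) (t := Finset.univ)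
    (fun x _ => Finset.mem_univ _)]
  refine Finset.sum_congr rfl fun w _ => ?_
  rw [numEdges, Finset.filter_filter]

lemma sum_numEdges_eq_indeg (tail head : E → V) (v : V) :
    ∑ u : V, numEdges tail head u v = indeg head v := by
  rw [indeg, Finset.card_eq_sum_card_fiberwise (f := tail) (t := Finset.univ)
    (fun x _ => Finset.mem_univ _)]
  refine Finset.sum_congr rfl fun u _ => ?_
  rw [numEdges, Finset.filter_filter]
  congr 1
  ext e
  simp [and_comm]

lemma indegIn_eq_sum (tail head : E → V) (A : Finset V) (v : V) :
    indegIn tail head A v = ∑ u ∈ A, numEdges tail head u v := by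
  rw [indegIn, Finset.card_eq_sum_card_fiberwise (f := tail) (t := A)
    (fun x hx => (Finset.mem_filter.mp hx).2.2)]
  refine Finset.sum_congr rfl fun u hu => ?_
  rw [numEdges]
  congr 1
  ext e
  simp only [Finset.mem_filter, Finset.mem_univ, true_and]
  constructor
  · rintro ⟨⟨h1, h2⟩, h3⟩; exact ⟨h3, h1⟩
  · rintro ⟨h1, h2⟩; exact ⟨⟨h2, h1 ▸ hu⟩, h1⟩

lemma sum_vne {s : V} {M : Type} [AddCommMonoid M] (f : V → M) :
    ∑ w : Vne s, f w.1 = ∑ w ∈ Finset.univ.filter (· ≠ s), f w := by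
  rw [Finset.sum_subtype (p := fun v => v ≠ s) _ (by simp) f]

lemma sum_vne_le_indeg (tail head : E → V) (s : V) (v : V) :
    ∑ w : Vne s, numEdges tail head w.1 v ≤ indeg head v := by
  rw [sum_vne (s := s) (f := fun u => numEdges tail head u v)]
  rw [← sum_numEdges_eq_indeg tail head v]
  exact Finset.sum_le_sum_of_subset (Finset.filter_subset _ _)

lemma sum_vne_add_numEdges_s (tail head : E → V) (s : V) (v : V) :
    ∑ w : Vne s, numEdges tail head v w.1 + numEdges tail head v s = outdeg tail v := by
  rw [sum_vne (s := s) (f := fun u => numEdges tail head v u), ← sum_numEdges_eq_outdeg tail head v]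
  rw [← Finset.sum_filter_add_sum_filter_not Finset.univ (· ≠ s) (numEdges tail head v)]
  congr 1
  have : Finset.univ.filter (fun x => ¬ x ≠ s) = {s} := by
    ext x; simp
  rw [this, Finset.sum_singleton]


section Lists
variable {s : V} (tail head : E → V)

lemma fireList_append (τ : Vne s → ℕ) (l1 l2 : List (Vne s)) :
    fireList tail head τ (l1 ++ l2) = fireList tail head (fireList tail head τ l1) l2 := by
  induction l1 generalizing τ with
  | nil => simp [fireList]
  | cons u l ih => simp [fireList, ih]

lemma legal_append (τ : Vne s → ℕ) (l1 l2 : List (Vne s)) :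
    Legal tail head τ (l1 ++ l2) ↔
      Legal tail head τ l1 ∧ Legal tail head (fireList tail head τ l1) l2 := by
  induction l1 generalizing τ with
  | nil => simp [Legal, fireList]
  | cons u l ih => simp [Legal, fireList, ih, and_assoc]

lemma length_eq_sum_count (l : List (Vne s)) :
    l.length = ∑ v : Vne s, l.count v := by
  induction l with
  | nil => simp
  | cons u l ih =>
    simp only [List.length_cons, ih, List.count_cons]
    rw [Finset.sum_add_distrib]
    simp [Finset.sum_ite_eq', Subtype.val_inj]

/-- The key accounting identity for a legal firing sequence. -/
lemma fireList_count_formula (τ : Vne s → ℕ) (l : List (Vne s))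
    (hl : Legal tail head τ l) (v : Vne s) :
    (fireList tail head τ l v : ℤ)
      = (τ v : ℤ) + ∑ w : Vne s, (l.count w : ℤ) * (numEdges tail head w.1 v.1 : ℤ)
        - (l.count v : ℤ) * (outdeg tail v.1 : ℤ) := by
  induction l generalizing τ with
  | nil => simp [fireList]
  | cons u l ih =>
    obtain ⟨hu, hl⟩ := hl
    have hact : (outdeg tail u.1 : ℤ) ≤ (τ u : ℤ) := by exact_mod_cast hu
    rw [fireList, ih _ hl]
    have hfire : ((fire tail head τ u v : ℕ) : ℤ)
        = (τ v : ℤ) + (numEdges tail head u.1 v.1 : ℤ)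
          - (if v = u then (outdeg tail u.1 : ℤ) else 0) := by
      by_cases h : v = u
      · subst h
        simp only [fire, if_pos rfl]
        have : outdeg tail v.1 ≤ τ v + numEdges tail head v.1 v.1 :=
          le_trans hu (Nat.le_add_right _ _)
        push_cast [Nat.cast_sub this]
        ring
      · simp only [fire, if_neg h]
        push_cast
        ring
    have hcount : ∀ w : Vne s, ((u :: l).count w : ℤ)
        = (l.count w : ℤ) + (if w = u then 1 else 0) := by
      intro w
      by_cases h : w = u <;> simp [List.count_cons, h] <;> exact fun h' => h (Subtype.ext h'.symm)
    rw [hfire]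
    have hsum : ∑ w : Vne s, ((u :: l).count w : ℤ) * (numEdges tail head w.1 v.1 : ℤ)
        = (∑ w : Vne s, (l.count w : ℤ) * (numEdges tail head w.1 v.1 : ℤ))
          + (numEdges tail head u.1 v.1 : ℤ) := by
      simp only [hcount, add_mul, ite_mul, one_mul, zero_mul]
      rw [Finset.sum_add_distrib]
      simp [Finset.sum_ite_eq']
    rw [hsum, hcount v]
    by_cases h : v = u <;> simp [h] <;> ring

/-- Extract the last block: a decomposition picking an element of `S` whose last
occurrence is earliest. -/
lemma exists_last_block (S : Finset (Vne s)) (hS : S.Nonempty) :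
    ∀ l : List (Vne s), (∀ u ∈ S, u ∈ l) →
      ∃ (l1 : List (Vne s)) (v : Vne s) (l2 : List (Vne s)),
        l = l1 ++ v :: l2 ∧ v ∈ S ∧ v ∉ l2 ∧ ∀ u ∈ S, u ≠ v → u ∈ l2 := by
  intro l
  induction l with
  | nil =>
    intro h
    obtain ⟨u, hu⟩ := hS
    exact absurd (h u hu) List.not_mem_nil
  | cons a l ih =>
    intro h
    by_cases hall : ∀ u ∈ S, u ∈ l
    · obtain ⟨l1, v, l2, rfl, hv, hv2, hv3⟩ := ih hall
      exact ⟨a :: l1, v, l2, rfl, hv, hv2, hv3⟩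
    · push_neg at hall
      obtain ⟨w, hwS, hwl⟩ := hall
      have hwa : w = a := by
        rcases List.mem_cons.mp (h w hwS) with h' | h'
        · exact h'
        · exact absurd h' hwl
      subst hwa
      refine ⟨[], w, l, rfl, hwS, hwl, fun u hu hne => ?_⟩
      rcases List.mem_cons.mp (h u hu) with h' | h'
      · exact absurd h' hne
      · exact h'

end Lists


section Bounds
variable {s : V} (tail head : E → V)

lemma sum_fireList (τ : Vne s → ℕ) (l : List (Vne s)) (hl : Legal tail head τ l) :
    (∑ v : Vne s, (fireList tail head τ l v : ℤ))
      = ∑ v : Vne s, (τ v : ℤ)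
        - ∑ w : Vne s, (l.count w : ℤ) * (numEdges tail head w.1 s : ℤ) := by
  have h1 : ∀ v : Vne s, (fireList tail head τ l v : ℤ)
      = (τ v : ℤ) + ∑ w : Vne s, (l.count w : ℤ) * (numEdges tail head w.1 v.1 : ℤ)
        - (l.count v : ℤ) * (outdeg tail v.1 : ℤ) :=
    fireList_count_formula tail head τ l hl
  have h2 : ∀ w : Vne s, ∑ v : Vne s, (numEdges tail head w.1 v.1 : ℤ)
      = (outdeg tail w.1 : ℤ) - (numEdges tail head w.1 s : ℤ) := by
    intro w
    have := sum_vne_add_numEdges_s tail head s w.1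
    have : ((∑ v : Vne s, numEdges tail head w.1 v.1 : ℕ) : ℤ)
        + (numEdges tail head w.1 s : ℤ) = (outdeg tail w.1 : ℤ) := by exact_mod_cast this
    push_cast at this
    linarith [this]
  simp only [h1]
  rw [Finset.sum_sub_distrib, Finset.sum_add_distrib, Finset.sum_comm]
  have h3 : ∑ w : Vne s, ∑ v : Vne s, (l.count w : ℤ) * (numEdges tail head w.1 v.1 : ℤ)
      = ∑ w : Vne s, ((l.count w : ℤ) * (outdeg tail w.1 : ℤ)
          - (l.count w : ℤ) * (numEdges tail head w.1 s : ℤ)) := by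
    refine Finset.sum_congr rfl fun w _ => ?_
    rw [← Finset.mul_sum, h2 w]
    ring
  rw [h3, Finset.sum_sub_distrib]
  ring

lemma sum_fireList_le (τ : Vne s → ℕ) (l : List (Vne s)) (hl : Legal tail head τ l) :
    (∑ v : Vne s, (fireList tail head τ l v : ℤ)) ≤ ∑ v : Vne s, (τ v : ℤ) := by
  rw [sum_fireList tail head τ l hl]
  have : (0:ℤ) ≤ ∑ w : Vne s, (l.count w : ℤ) * (numEdges tail head w.1 s : ℤ) :=
    Finset.sum_nonneg fun w _ => mul_nonneg (by positivity) (by positivity)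
  linarith

lemma count_mul_s_le (τ : Vne s → ℕ) (l : List (Vne s)) (hl : Legal tail head τ l)
    (u : Vne s) :
    (l.count u : ℤ) * (numEdges tail head u.1 s : ℤ) ≤ ∑ v : Vne s, (τ v : ℤ) := by
  have h := sum_fireList tail head τ l hl
  have hnn : (0:ℤ) ≤ ∑ v : Vne s, (fireList tail head τ l v : ℤ) :=
    Finset.sum_nonneg fun v _ => by positivity
  have hle : (l.count u : ℤ) * (numEdges tail head u.1 s : ℤ)
      ≤ ∑ w : Vne s, (l.count w : ℤ) * (numEdges tail head w.1 s : ℤ) :=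
    Finset.single_le_sum (f := fun w : Vne s => (l.count w : ℤ) * (numEdges tail head w.1 s : ℤ))
      (fun w _ => mul_nonneg (by positivity) (by positivity)) (Finset.mem_univ u)
  linarith

lemma count_le_of_edge (τ : Vne s → ℕ) (l : List (Vne s)) (hl : Legal tail head τ l)
    (u u' : Vne s) (he : 1 ≤ numEdges tail head u.1 u'.1) :
    (l.count u : ℤ) ≤ ∑ v : Vne s, (τ v : ℤ) + (l.count u' : ℤ) * (outdeg tail u'.1 : ℤ) := by
  have h := fireList_count_formula tail head τ l hl u'
  have hfin : (0:ℤ) ≤ (fireList tail head τ l u' : ℤ) := by positivity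
  have hfin2 : (fireList tail head τ l u' : ℤ) ≤ ∑ v : Vne s, (τ v : ℤ) := by
    have := sum_fireList_le tail head τ l hl
    have hle : (fireList tail head τ l u' : ℤ) ≤ ∑ v : Vne s, (fireList tail head τ l v : ℤ) :=
      Finset.single_le_sum (f := fun v : Vne s => (fireList tail head τ l v : ℤ))
        (fun v _ => by positivity) (Finset.mem_univ u')
    linarith
  have hterm : (l.count u : ℤ) ≤ ∑ w : Vne s, (l.count w : ℤ) * (numEdges tail head w.1 u'.1 : ℤ) := by
    have h1 : (l.count u : ℤ) ≤ (l.count u : ℤ) * (numEdges tail head u.1 u'.1 : ℤ) := by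
      have : (1:ℤ) ≤ (numEdges tail head u.1 u'.1 : ℤ) := by exact_mod_cast he
      nlinarith [Int.ofNat_nonneg (l.count u)]
    have h2 : (l.count u : ℤ) * (numEdges tail head u.1 u'.1 : ℤ)
        ≤ ∑ w : Vne s, (l.count w : ℤ) * (numEdges tail head w.1 u'.1 : ℤ) :=
      Finset.single_le_sum (f := fun w : Vne s => (l.count w : ℤ) * (numEdges tail head w.1 u'.1 : ℤ))
        (fun w _ => mul_nonneg (by positivity) (by positivity)) (Finset.mem_univ u)
    linarith
  have hτ : (0:ℤ) ≤ (τ u' : ℤ) := by positivity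
  linarith

end Bounds


section Stabilize
variable {s : V} (tail head : E → V)

lemma exists_count_bound
    (hglobal : ∀ v : V, Relation.ReflTransGen (fun a b => ∃ e, tail e = a ∧ head e = b) v s)
    (τ : Vne s → ℕ) (u : Vne s) :
    ∃ M : ℕ, ∀ l, Legal tail head τ l → l.count u ≤ M := by
  have key : ∀ (v : V), Relation.ReflTransGen (fun a b => ∃ e, tail e = a ∧ head e = b) v s →
      ∀ (h : v ≠ s), ∃ M : ℕ, ∀ l, Legal tail head τ l → l.count ⟨v, h⟩ ≤ M := by
    intro v hv
    induction hv using Relation.ReflTransGen.head_induction_on with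
    | refl => exact fun h => absurd rfl h
    | head hstep hrest ih =>
      rename_i a c
      intro ha
      obtain ⟨e, he1, he2⟩ := hstep
      have hne : 1 ≤ numEdges tail head a c := by
        rw [numEdges]
        exact Finset.card_pos.mpr ⟨e, by simp [he1, he2]⟩
      by_cases hc : c = s
      · rw [hc] at hne
        refine ⟨∑ v : Vne s, τ v, fun l hl => ?_⟩
        have h1 := count_mul_s_le tail head τ l hl ⟨a, ha⟩
        have h2 : (1:ℤ) ≤ (numEdges tail head a s : ℤ) := by exact_mod_cast hne
        have h3 : ((l.count ⟨a, ha⟩ : ℕ) : ℤ) ≤ ∑ v : Vne s, (τ v : ℤ) := by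
          nlinarith [Int.ofNat_nonneg (l.count (⟨a, ha⟩ : Vne s))]
        have h4 : (∑ v : Vne s, (τ v : ℤ)) = ((∑ v : Vne s, τ v : ℕ) : ℤ) := by push_cast; rfl
        rw [h4] at h3
        exact_mod_cast h3
      · obtain ⟨Mc, hMc⟩ := ih hc
        refine ⟨∑ v : Vne s, τ v + Mc * outdeg tail c, fun l hl => ?_⟩
        have h1 := count_le_of_edge tail head τ l hl ⟨a, ha⟩ ⟨c, hc⟩ hne
        have h2 : l.count ⟨c, hc⟩ ≤ Mc := hMc l hl
        have h2' : ((l.count ⟨c, hc⟩ : ℕ) : ℤ) ≤ (Mc : ℤ) := by exact_mod_cast h2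
        have h4 : (∑ v : Vne s, (τ v : ℤ)) = ((∑ v : Vne s, τ v : ℕ) : ℤ) := by push_cast; rfl
        have h5 : ((l.count ⟨a, ha⟩ : ℕ) : ℤ)
            ≤ ((∑ v : Vne s, τ v : ℕ) : ℤ) + (Mc : ℤ) * (outdeg tail c : ℤ) := by
          rw [← h4]
          have hd : (0:ℤ) ≤ (outdeg tail c : ℤ) := by positivity
          nlinarith
        exact_mod_cast h5
  obtain ⟨M, hM⟩ := key u.1 (hglobal u.1) u.2
  exact ⟨M, hM⟩

lemma exists_length_bound
    (hglobal : ∀ v : V, Relation.ReflTransGen (fun a b => ∃ e, tail e = a ∧ head e = b) v s)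
    (τ : Vne s → ℕ) :
    ∃ N : ℕ, ∀ l, Legal tail head τ l → l.length ≤ N := by
  choose M hM using fun u : Vne s => exists_count_bound tail head hglobal τ u
  refine ⟨∑ u : Vne s, M u, fun l hl => ?_⟩
  rw [length_eq_sum_count]
  exact Finset.sum_le_sum fun u _ => hM u l hl

lemma exists_stabilize (τ : Vne s → ℕ) (k : ℕ)
    (hk : ∀ l, Legal tail head τ l → l.length ≤ k) :
    ∃ l, Legal tail head τ l ∧ Stable tail (fireList tail head τ l) := by
  induction k generalizing τ with
  | zero =>
    by_cases hst : Stable tail τ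
    · exact ⟨[], trivial, hst⟩
    · exfalso
      obtain ⟨u, hu⟩ := not_forall.mp hst
      have hu' : Active tail τ u := not_lt.mp hu
      have : Legal tail head τ [u] := ⟨hu', trivial⟩
      simpa using hk [u] this
  | succ k ih =>
    by_cases hst : Stable tail τ
    · exact ⟨[], trivial, hst⟩
    · obtain ⟨u, hu⟩ := not_forall.mp hst
      have hu' : Active tail τ u := not_lt.mp hu
      have hk' : ∀ l, Legal tail head (fire tail head τ u) l → l.length ≤ k := by
        intro l hl
        have := hk (u :: l) ⟨hu', hl⟩
        simpa using this
      obtain ⟨l, hl, hstab⟩ := ih (fire tail head τ u) hk'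
      exact ⟨u :: l, ⟨hu', hl⟩, hstab⟩

end Stabilize


section Reduce
variable {s : V} (tail head : E → V)

lemma ample_step
    (heul : ∀ v : V, v ≠ s → indeg head v ≤ outdeg tail v)
    (σ : Vne s → ℕ)
    (hample : ∀ A : Finset V, (∀ a ∈ A, a ≠ s) → A.Nonempty →
        ∃ v : Vne s, v.1 ∈ A ∧ indegIn tail head A v.1 ≤ σ v)
    (z : Vne s → ℕ) (hz : ∃ v, 1 ≤ z v) :
    ∃ u : Vne s, 1 ≤ z u ∧
      ∑ w : Vne s, z w * numEdges tail head w.1 u.1 ≤ σ u + (z u - 1) * outdeg tail u.1 := by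
  obtain ⟨v₀, hv₀⟩ := hz
  set M := Finset.univ.sup z with hM
  have hM1 : 1 ≤ M := le_trans hv₀ (Finset.le_sup (Finset.mem_univ v₀))
  obtain ⟨m, hm⟩ : ∃ m, M = m + 1 := ⟨M - 1, (Nat.succ_pred_eq_of_pos hM1).symm⟩
  set T : Finset (Vne s) := Finset.univ.filter (fun w => z w = M) with hT
  have hTne : T.Nonempty := by
    obtain ⟨w₀, _, hw₀⟩ := Finset.exists_mem_eq_sup Finset.univ ⟨v₀, Finset.mem_univ v₀⟩ z
    exact ⟨w₀, by simp [hT, hw₀.symm, hM]⟩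
  set A : Finset V := T.image Subtype.val with hA
  have hAs : ∀ a ∈ A, a ≠ s := by
    intro a ha
    obtain ⟨w, _, rfl⟩ := Finset.mem_image.mp ha
    exact w.2
  obtain ⟨v, hvA, hvamp⟩ := hample A hAs (hTne.image _)
  have hvT : v ∈ T := by
    obtain ⟨w, hw, hwv⟩ := Finset.mem_image.mp hvA
    rwa [show w = v from Subtype.ext hwv] at hw
  have hzv : z v = M := (Finset.mem_filter.mp hvT).2
  refine ⟨v, by omega, ?_⟩
  have hsplit : ∑ w : Vne s, z w * numEdges tail head w.1 v.1
      = ∑ w ∈ T, z w * numEdges tail head w.1 v.1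
        + ∑ w ∈ Finset.univ.filter (fun w => ¬ z w = M), z w * numEdges tail head w.1 v.1 := by
    rw [hT, Finset.sum_filter_add_sum_filter_not]
  have hJT : ∑ w ∈ T, numEdges tail head w.1 v.1 = indegIn tail head A v.1 := by
    rw [indegIn_eq_sum, hA, Finset.sum_image]
    intro x _ y _ hxy
    exact Subtype.ext hxy
  have hsum1 : ∑ w ∈ T, z w * numEdges tail head w.1 v.1
      = M * ∑ w ∈ T, numEdges tail head w.1 v.1 := by
    rw [Finset.mul_sum]
    refine Finset.sum_congr rfl fun w hw => ?_
    rw [(Finset.mem_filter.mp hw).2]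
  have hsum2 : ∑ w ∈ Finset.univ.filter (fun w => ¬ z w = M), z w * numEdges tail head w.1 v.1
      ≤ m * ∑ w ∈ Finset.univ.filter (fun w => ¬ z w = M), numEdges tail head w.1 v.1 := by
    rw [Finset.mul_sum]
    refine Finset.sum_le_sum fun w hw => ?_
    have h1 : z w ≤ M := Finset.le_sup (Finset.mem_univ w)
    have h2 : ¬ z w = M := (Finset.mem_filter.mp hw).2
    exact Nat.mul_le_mul_right _ (by omega)
  have hJle : ∑ w : Vne s, numEdges tail head w.1 v.1 ≤ outdeg tail v.1 :=
    le_trans (sum_vne_le_indeg tail head s v.1) (heul v.1 v.2)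
  have hJsplit : ∑ w ∈ T, numEdges tail head w.1 v.1
      + ∑ w ∈ Finset.univ.filter (fun w => ¬ z w = M), numEdges tail head w.1 v.1
      = ∑ w : Vne s, numEdges tail head w.1 v.1 := by
    rw [hT, Finset.sum_filter_add_sum_filter_not]
  rw [hsplit, hzv]
  have hIle : ∑ w ∈ T, numEdges tail head w.1 v.1 ≤ σ v := hJT ▸ hvamp
  set JT := ∑ w ∈ T, numEdges tail head w.1 v.1
  set JC := ∑ w ∈ Finset.univ.filter (fun w => ¬ z w = M), numEdges tail head w.1 v.1
  calc (∑ w ∈ T, z w * numEdges tail head w.1 v.1)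
        + ∑ w ∈ Finset.univ.filter (fun w => ¬ z w = M), z w * numEdges tail head w.1 v.1
      ≤ M * JT + m * JC := by
        rw [hsum1]
        exact Nat.add_le_add_left hsum2 _
    _ = JT + m * (JT + JC) := by rw [hm]; ring
    _ ≤ σ v + (M - 1) * outdeg tail v.1 := by
        have h4 : JT + JC ≤ outdeg tail v.1 := hJsplit ▸ hJle
        have h3 : m * (JT + JC) ≤ m * outdeg tail v.1 := Nat.mul_le_mul_left m h4
        have hm' : M - 1 = m := by omega
        rw [hm']
        omega

lemma reduce
    (heul : ∀ v : V, v ≠ s → indeg head v ≤ outdeg tail v)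
    (σ : Vne s → ℕ)
    (hample : ∀ A : Finset V, (∀ a ∈ A, a ≠ s) → A.Nonempty →
        ∃ v : Vne s, v.1 ∈ A ∧ indegIn tail head A v.1 ≤ σ v) :
    ∀ (n : ℕ) (z : Vne s → ℕ), (∑ v : Vne s, z v = n) → ∀ τ : Vne s → ℕ,
      (∀ v : Vne s, (τ v : ℤ) = (σ v : ℤ) + (z v : ℤ) * (outdeg tail v.1 : ℤ)
          - ∑ w : Vne s, (z w : ℤ) * (numEdges tail head w.1 v.1 : ℤ)) →
      ∃ l, Legal tail head τ l ∧ fireList tail head τ l = σ := by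
  intro n
  induction n using Nat.strong_induction_on with
  | _ n ih =>
    intro z hzn τ hτ
    by_cases hz0 : ∀ v, z v = 0
    · refine ⟨[], trivial, funext fun v => ?_⟩
      have := hτ v
      simp only [hz0, Nat.cast_zero, zero_mul, add_zero, Finset.sum_const_zero, sub_zero] at this
      exact_mod_cast this
    · push_neg at hz0
      obtain ⟨v₁, hv₁⟩ := hz0
      obtain ⟨u, hu1, hu2⟩ := ample_step tail head heul σ hample z ⟨v₁, Nat.one_le_iff_ne_zero.mpr hv₁⟩
      -- u is active
      have hz1 : ((z u - 1 : ℕ) : ℤ) = (z u : ℤ) - 1 := by omega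
      have hu2' : (∑ w : Vne s, (z w : ℤ) * (numEdges tail head w.1 u.1 : ℤ))
          ≤ (σ u : ℤ) + ((z u : ℤ) - 1) * (outdeg tail u.1 : ℤ) := by
        have : ((∑ w : Vne s, z w * numEdges tail head w.1 u.1 : ℕ) : ℤ)
            ≤ ((σ u + (z u - 1) * outdeg tail u.1 : ℕ) : ℤ) := by exact_mod_cast hu2
        push_cast [Nat.cast_sub hu1] at this
        linarith [this]
      have hact : Active tail τ u := by
        have h1 := hτ u
        have h2 : (outdeg tail u.1 : ℤ) ≤ (τ u : ℤ) := by
          rw [h1]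
          have hzu : (1:ℤ) ≤ (z u : ℤ) := by exact_mod_cast hu1
          nlinarith [Int.ofNat_nonneg (outdeg tail u.1)]
        exact_mod_cast h2
      set z' := Function.update z u (z u - 1) with hz'
      have hz'u : z' u = z u - 1 := Function.update_self u _ z
      have hz'w : ∀ w, w ≠ u → z' w = z w := fun w hw => Function.update_of_ne hw _ z
      have hsumz : ∑ v : Vne s, z' v = n - 1 := by
        rw [← hzn]
        rw [← Finset.add_sum_erase _ z' (Finset.mem_univ u), ← Finset.add_sum_erase _ z (Finset.mem_univ u)]
        have : ∑ v ∈ Finset.univ.erase u, z' v = ∑ v ∈ Finset.univ.erase u, z v :=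
          Finset.sum_congr rfl fun w hw => hz'w w (Finset.ne_of_mem_erase hw)
        rw [hz'u, this]
        have hn : z u ≥ 1 := hu1
        have h2 : z u ≤ ∑ v : Vne s, z v := Finset.single_le_sum (fun v _ => Nat.zero_le _) (Finset.mem_univ u)
        omega
      have hnpos : 1 ≤ n := by
        rw [← hzn]
        exact le_trans hu1 (Finset.single_le_sum (fun v _ => Nat.zero_le _) (Finset.mem_univ u))
      have hsumdiff : ∀ v : Vne s,
          ∑ w : Vne s, (z' w : ℤ) * (numEdges tail head w.1 v.1 : ℤ)
            = (∑ w : Vne s, (z w : ℤ) * (numEdges tail head w.1 v.1 : ℤ))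
              - (numEdges tail head u.1 v.1 : ℤ) := by
        intro v
        rw [← Finset.add_sum_erase _ (fun w => (z' w : ℤ) * (numEdges tail head w.1 v.1 : ℤ)) (Finset.mem_univ u),
            ← Finset.add_sum_erase _ (fun w => (z w : ℤ) * (numEdges tail head w.1 v.1 : ℤ)) (Finset.mem_univ u)]
        have he : ∑ w ∈ Finset.univ.erase u, (z' w : ℤ) * (numEdges tail head w.1 v.1 : ℤ)
            = ∑ w ∈ Finset.univ.erase u, (z w : ℤ) * (numEdges tail head w.1 v.1 : ℤ) :=
          Finset.sum_congr rfl fun w hw => by rw [hz'w w (Finset.ne_of_mem_erase hw)]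
        rw [he, hz'u, hz1]
        ring
      have hτ' : ∀ v : Vne s, ((fire tail head τ u v : ℕ) : ℤ)
          = (σ v : ℤ) + (z' v : ℤ) * (outdeg tail v.1 : ℤ)
            - ∑ w : Vne s, (z' w : ℤ) * (numEdges tail head w.1 v.1 : ℤ) := by
        intro v
        rw [hsumdiff v]
        by_cases hvu : v = u
        · subst hvu
          have hle : outdeg tail v.1 ≤ τ v + numEdges tail head v.1 v.1 :=
            le_trans hact (Nat.le_add_right _ _)
          simp only [fire, if_pos rfl]
          push_cast [Nat.cast_sub hle]
          rw [hτ v, hz'u, hz1]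
          push_cast
          ring
        · simp only [fire, if_neg hvu]
          push_cast
          rw [hτ v, hz'w v hvu]
          ring
      obtain ⟨l, hl, hfl⟩ := ih (n - 1) (by omega) z' hsumz (fire tail head τ u) hτ'
      exact ⟨u :: l, ⟨hact, hl⟩, hfl⟩

end Reduce

end AmpleAux


open AmpleAux

/-- **Ample subgraphs characterize recurrence.**  Let `G` be an Eulerian digraph with
sink `s`.  A stable chip configuration `σ` on `G` is recurrent if and only if every
nonempty induced subgraph of `G ∖ s` is ample for `σ`, i.e. for every nonempty set `A`
of non-sink vertices there is a vertex `v ∈ A` whose number of chips is at least its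
in-degree within the induced subgraph on `A`. -/
theorem recurrent_iff_every_induced_subgraph_ample
    {V E : Type} [Fintype V] [DecidableEq V] [Fintype E]
    (tail head : E → V)
    (s : V) (hs : outdeg tail s = 0)
    (heul : ∀ v : V, v ≠ s → indeg head v ≤ outdeg tail v)
    (hglobal : ∀ v : V,
      Relation.ReflTransGen (fun a b => ∃ e, tail e = a ∧ head e = b) v s)
    (σ : Vne s → ℕ) (hσ : Stable tail σ) :
    Recurrent tail head σ ↔
      ∀ A : Finset V, (∀ a ∈ A, a ≠ s) → A.Nonempty →
        ∃ v : Vne s, v.1 ∈ A ∧ indegIn tail head A v.1 ≤ σ v := by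

  constructor
  · rintro ⟨hstab, hacc⟩ A hAs hAne
    by_contra hno
    push_neg at hno
    obtain ⟨β, l, hleg, hfl⟩ := hacc (fun v => outdeg tail v.1)
    set τ0 : Vne s → ℕ := fun v => outdeg tail v.1 + β v with hτ0
    set S : Finset (Vne s) := Finset.univ.filter (fun v => v.1 ∈ A) with hS
    have hSne : S.Nonempty := by
      obtain ⟨a, ha⟩ := hAne
      exact ⟨⟨a, hAs a ha⟩, by simp [hS, ha]⟩
    have hAim : A = S.image Subtype.val := by
      ext a
      simp only [hS, Finset.mem_image, Finset.mem_filter, Finset.mem_univ, true_and]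
      constructor
      · intro ha; exact ⟨⟨a, hAs a ha⟩, ha, rfl⟩
      · rintro ⟨w, hw, rfl⟩; exact hw
    have hmem : ∀ u ∈ S, u ∈ l := by
      intro u huS
      by_contra hul
      have hc0 : l.count u = 0 := List.count_eq_zero.mpr hul
      have hform := fireList_count_formula tail head τ0 l hleg u
      rw [hfl] at hform
      have hsn : (0:ℤ) ≤ ∑ w : Vne s, (l.count w : ℤ) * (numEdges tail head w.1 u.1 : ℤ) :=
        Finset.sum_nonneg fun w _ => mul_nonneg (by positivity) (by positivity)
      have hβn : (0:ℤ) ≤ (β u : ℤ) := by positivity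
      have hτ0u : (τ0 u : ℤ) = (outdeg tail u.1 : ℤ) + (β u : ℤ) := by push_cast; rfl
      have hle : (outdeg tail u.1 : ℤ) ≤ (σ u : ℤ) := by
        rw [hform, hc0]
        push_cast
        linarith
      have := hstab u
      omega
    obtain ⟨l1, v, l2, rfl, hvS, hvl2, hrest⟩ := exists_last_block S hSne l hmem
    have hsplit := (legal_append tail head τ0 l1 (v :: l2)).mp hleg
    have hleg1 := hsplit.1
    have hactv : Active tail (fireList tail head τ0 l1) v := hsplit.2.1
    have hleg2 : Legal tail head (fire tail head (fireList tail head τ0 l1) v) l2 := hsplit.2.2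
    set τ1 := fireList tail head τ0 l1 with hτ1
    set τ2 := fire tail head τ1 v with hτ2
    have hfl2 : fireList tail head τ2 l2 = σ := by
      rw [← hfl, fireList_append]
      rfl
    have hform := fireList_count_formula tail head τ2 l2 hleg2 v
    rw [hfl2] at hform
    have hc0 : l2.count v = 0 := List.count_eq_zero.mpr hvl2
    have hτ2v : (numEdges tail head v.1 v.1 : ℤ) ≤ (τ2 v : ℤ) := by
      have h1 : τ2 v = τ1 v + numEdges tail head v.1 v.1 - outdeg tail v.1 := by
        simp [hτ2, fire]
      have h2 : outdeg tail v.1 ≤ τ1 v := hactv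
      have : numEdges tail head v.1 v.1 ≤ τ2 v := by omega
      exact_mod_cast this
    have hsumlb : (∑ u ∈ S.erase v, (numEdges tail head u.1 v.1 : ℤ))
        ≤ ∑ w : Vne s, (l2.count w : ℤ) * (numEdges tail head w.1 v.1 : ℤ) := by
      calc ∑ u ∈ S.erase v, (numEdges tail head u.1 v.1 : ℤ)
          ≤ ∑ u ∈ S.erase v, (l2.count u : ℤ) * (numEdges tail head u.1 v.1 : ℤ) := by
            refine Finset.sum_le_sum fun u hu => ?_
            have humem : u ∈ l2 :=
              hrest u (Finset.mem_of_mem_erase hu) (Finset.ne_of_mem_erase hu)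
            have hcnt : 1 ≤ l2.count u := by
              have := List.count_pos_iff.mpr humem
              omega
            have hcnt' : (1:ℤ) ≤ (l2.count u : ℤ) := by exact_mod_cast hcnt
            nlinarith [Int.ofNat_nonneg (numEdges tail head u.1 v.1)]
        _ ≤ ∑ w : Vne s, (l2.count w : ℤ) * (numEdges tail head w.1 v.1 : ℤ) := by
            refine Finset.sum_le_sum_of_subset_of_nonneg (Finset.subset_univ _) ?_
            intro w _ _
            exact mul_nonneg (by positivity) (by positivity)
    have hind : (indegIn tail head A v.1 : ℤ)
        = (numEdges tail head v.1 v.1 : ℤ) + ∑ u ∈ S.erase v, (numEdges tail head u.1 v.1 : ℤ) := by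
      rw [indegIn_eq_sum, hAim, Finset.sum_image (fun x _ y _ hxy => Subtype.ext hxy)]
      rw [← Finset.add_sum_erase _ _ hvS]
      push_cast
      ring
    have hfinal : (indegIn tail head A v.1 : ℤ) ≤ (σ v : ℤ) := by
      rw [hform, hc0, hind]
      push_cast
      linarith
    have hvA : v.1 ∈ A := (Finset.mem_filter.mp hvS).2
    have := hno v hvA
    omega
  · intro hample
    refine ⟨hσ, ?_⟩
    intro ζ
    set dmax := Finset.univ.sup (fun v : Vne s => outdeg tail v.1) with hdmax
    set m := dmax + Finset.univ.sup ζ with hm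
    set τc : Vne s → ℕ := fun _ => m with hτc
    obtain ⟨N, hN⟩ := exists_length_bound tail head hglobal τc
    obtain ⟨l₀, hleg₀, hstab₀⟩ := exists_stabilize tail head τc N hN
    set x : Vne s → ℕ := fun v => l₀.count v with hx
    set fin := fireList tail head τc l₀ with hfin
    have hform : ∀ v : Vne s, (fin v : ℤ)
        = (m : ℤ) + ∑ w : Vne s, (x w : ℤ) * (numEdges tail head w.1 v.1 : ℤ)
          - (x v : ℤ) * (outdeg tail v.1 : ℤ) :=
      fun v => fireList_count_formula tail head τc l₀ hleg₀ v
    have hfm : ∀ v : Vne s, fin v + ζ v < m := by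
      intro v
      have h1 : fin v < outdeg tail v.1 := hstab₀ v
      have h2 : outdeg tail v.1 ≤ dmax := Finset.le_sup (f := fun v : Vne s => outdeg tail v.1) (Finset.mem_univ v)
      have h3 : ζ v ≤ Finset.univ.sup ζ := Finset.le_sup (Finset.mem_univ v)
      omega
    set τ0 : Vne s → ℕ := fun v => σ v + (m - fin v) with hτ0
    set β : Vne s → ℕ := fun v => τ0 v - ζ v with hβ
    have hζβ : ∀ v, ζ v + β v = τ0 v := by
      intro v
      have h1 : ζ v ≤ τ0 v := by
        have := hfm v
        simp only [hτ0]
        omega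
      simp only [hβ]
      omega
    have hid : ∀ v : Vne s, (τ0 v : ℤ)
        = (σ v : ℤ) + (x v : ℤ) * (outdeg tail v.1 : ℤ)
          - ∑ w : Vne s, (x w : ℤ) * (numEdges tail head w.1 v.1 : ℤ) := by
      intro v
      have h1 := hform v
      have h2 : fin v ≤ m := le_of_lt (lt_of_le_of_lt (Nat.le_add_right _ _) (hfm v))
      have h3 : (τ0 v : ℤ) = (σ v : ℤ) + (m : ℤ) - (fin v : ℤ) := by
        simp only [hτ0]
        push_cast [Nat.cast_sub h2]
        ring
      rw [h3, h1]
      ring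
    obtain ⟨l, hl, hfl⟩ := reduce tail head heul σ hample (∑ v : Vne s, x v) x rfl τ0 hid
    have heq : (fun v => ζ v + β v) = τ0 := funext hζβ
    exact ⟨β, l, by rw [heq]; exact hl, by rw [heq]; exact hfl⟩
end

section
/- Let G be an Eulerian digraph with sink. A chip configuration σ on G is superstable if and only if the configuration δ − 1 − σ is recurrent, where δ(v) = d_v and 1 is the all-ones configuration. -/
/-- The reduced Laplacian of the digraph. -/
def reducedLaplacian {V E : Type} [Fintype E] [DecidableEq V] (tail head : E → V)
    (s : V) : Matrix (Vne s) (Vne s) ℤ :=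
  fun i j => (if i = j then (outdeg tail i.1 : ℤ) else 0) - (numEdges tail head i.1 j.1 : ℤ)

/-- The integer row span of the reduced Laplacian. -/
def rowSpan {V E : Type} [Fintype E] [DecidableEq V] (tail head : E → V) (s : V) :
    Submodule ℤ (Vne s → ℤ) :=
  Submodule.span ℤ (Set.range (fun i => reducedLaplacian tail head s i))

/-- The nonempty cluster `A` of non-sink vertices is allowed to fire from `σ`:
the cluster-firing `σ − Σ_{i ∈ A} Δ'_i` is nonnegative at every vertex. -/
def ClusterAllowed {V E : Type} [Fintype V] [Fintype E] [DecidableEq V] {s : V}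
    (tail head : E → V) (σ : Vne s → ℕ) (A : Finset (Vne s)) : Prop :=
  ∀ j : Vne s, (0 : ℤ) ≤ (σ j : ℤ) - ∑ i ∈ A, reducedLaplacian tail head s i j

/-- A chip configuration is superstable when no nonempty cluster is allowed to fire. -/
def Superstable {V E : Type} [Fintype V] [Fintype E] [DecidableEq V] {s : V}
    (tail head : E → V) (σ : Vne s → ℕ) : Prop :=
  ∀ A : Finset (Vne s), A.Nonempty → ¬ ClusterAllowed tail head σ A

namespace ChipAux

open Finset

set_option linter.unusedSectionVars false
set_option linter.unusedVariables false

variable {V E : Type} [Fintype V] [DecidableEq V] [Fintype E]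
variable (tail head : E → V) (s : V)

/-- sum of numEdges over heads equals outdeg -/
lemma sum_numEdges_eq_outdeg (v : V) :
    ∑ w : V, numEdges tail head v w = outdeg tail v := by
  rw [outdeg, Finset.card_eq_sum_card_fiberwise (f := head) (t := Finset.univ)
    (fun e _ => Finset.mem_univ _)]
  unfold numEdges
  congr 1
  ext w
  congr 1
  ext e
  simp [Finset.mem_filter, and_comm]

lemma numEdges_sink_left (hs : outdeg tail s = 0) (v : V) :
    numEdges tail head s v = 0 := by
  have : (Finset.univ.filter (fun e => tail e = s ∧ head e = v)) ⊆
      (Finset.univ.filter (fun e => tail e = s)) := by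
    intro e he
    simp only [Finset.mem_filter] at *
    exact ⟨he.1, he.2.1⟩
  have h2 := Finset.card_le_card this
  rw [outdeg] at hs
  rw [numEdges]
  omega

/-- sum of numEdges into v over non-sink sources equals indeg (when sink has no out-edges) -/
lemma sum_numEdges_eq_indeg (hs : outdeg tail s = 0) (v : V) :
    ∑ u : Vne s, numEdges tail head u.1 v = indeg head v := by
  have h1 : ∑ u : V, numEdges tail head u v = indeg head v := by
    rw [indeg, Finset.card_eq_sum_card_fiberwise (f := tail) (t := Finset.univ)
      (fun e _ => Finset.mem_univ _)]
    unfold numEdges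
    congr 1
    ext u
    congr 1
    ext e
    simp [Finset.mem_filter, and_comm]
  rw [← h1, ← Finset.sum_erase_add Finset.univ _ (Finset.mem_univ s),
    numEdges_sink_left tail head s hs, add_zero]
  exact (Finset.sum_subtype (Finset.univ.erase s)
    (fun x => by simp [Finset.mem_erase]) (fun u => numEdges tail head u v)).symm


section FireLemmas

variable {V E : Type} [Fintype V] [DecidableEq V] [Fintype E]
variable (tail head : E → V) {s : V}

/-- one legal firing, as an integer identity -/
lemma fire_int {σ : Vne s → ℕ} {v : Vne s} (hv : Active tail σ v) (w : Vne s) :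
    ((fire tail head σ v w : ℤ)) = (σ w : ℤ) - reducedLaplacian tail head s v w := by
  rw [fire, reducedLaplacian, Active] at *
  by_cases h : w = v
  · subst h
    simp only [if_pos rfl]
    have : outdeg tail w.1 ≤ σ w + numEdges tail head w.1 w.1 := by omega
    push_cast [Nat.cast_sub this]
    ring
  · simp only [if_neg h, if_neg (Ne.symm h)]
    push_cast
    ring

lemma fireList_int {σ : Vne s → ℕ} {l : List (Vne s)} (hl : Legal tail head σ l)
    (w : Vne s) :
    ((fireList tail head σ l w : ℤ)) =
      (σ w : ℤ) - ∑ v : Vne s, (l.count v : ℤ) * reducedLaplacian tail head s v w := by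
  induction l generalizing σ with
  | nil => simp [fireList]
  | cons u l ih =>
    obtain ⟨hact, hleg⟩ := hl
    rw [fireList, ih hleg, fire_int tail head hact]
    have : ∀ v : Vne s, ((u :: l).count v : ℤ) = (l.count v : ℤ) + if u = v then 1 else 0 := by
      intro v
      rw [List.count_cons]
      rcases eq_or_ne u v with h | h <;> simp [h] <;> exact Subtype.val_injective.ne h
    simp only [this, add_mul, Finset.sum_add_distrib, ite_mul, one_mul, zero_mul]
    rw [Finset.sum_ite_eq Finset.univ u (fun v => reducedLaplacian tail head s v w)]
    simp only [Finset.mem_univ, if_pos]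
    ring

/-- exact formula for a vertex not being fired (ℕ, no legality needed) -/
lemma fireList_not_mem {σ : Vne s → ℕ} {l : List (Vne s)} {v : Vne s} (hv : v ∉ l) :
    fireList tail head σ l v =
      σ v + ∑ u : Vne s, l.count u * numEdges tail head u.1 v.1 := by
  induction l generalizing σ with
  | nil => simp [fireList]
  | cons u l ih =>
    have hvu : v ≠ u := fun h => hv (h ▸ (List.mem_cons_self : u ∈ u :: l))
    have hvl : v ∉ l := fun h => hv (List.mem_cons_of_mem u h)
    rw [fireList, ih hvl]
    have hfv : fire tail head σ u v = σ v + numEdges tail head u.1 v.1 := by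
      rw [fire, if_neg hvu]
    rw [hfv]
    have : ∀ x : Vne s, (u :: l).count x = l.count x + if u = x then 1 else 0 := by
      intro x
      rw [List.count_cons]
      rcases eq_or_ne u x with h | h <;> simp [h] <;> exact Subtype.val_injective.ne h
    simp only [this, add_mul, Finset.sum_add_distrib, ite_mul, one_mul, zero_mul]
    rw [Finset.sum_ite_eq Finset.univ u (fun x => numEdges tail head x.1 v.1)]
    simp only [Finset.mem_univ, if_pos]
    ring

lemma fireList_append (σ : Vne s → ℕ) (l₁ l₂ : List (Vne s)) :
    fireList tail head σ (l₁ ++ l₂) = fireList tail head (fireList tail head σ l₁) l₂ := by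
  induction l₁ generalizing σ with
  | nil => simp [fireList]
  | cons u l ih => rw [List.cons_append, fireList, fireList, ih]

lemma legal_append {σ : Vne s → ℕ} {l₁ l₂ : List (Vne s)}
    (h : Legal tail head σ (l₁ ++ l₂)) :
    Legal tail head σ l₁ ∧ Legal tail head (fireList tail head σ l₁) l₂ := by
  induction l₁ generalizing σ with
  | nil => exact ⟨trivial, h⟩
  | cons u l ih =>
    obtain ⟨hact, hleg⟩ := h
    obtain ⟨h1, h2⟩ := ih hleg
    exact ⟨⟨hact, h1⟩, h2⟩

lemma length_eq_sum_count (l : List (Vne s)) :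
    l.length = ∑ v : Vne s, l.count v := by
  induction l with
  | nil => simp
  | cons u l ih =>
    have : ∀ x : Vne s, (u :: l).count x = l.count x + if u = x then 1 else 0 := by
      intro x
      rw [List.count_cons]
      rcases eq_or_ne u x with h | h <;> simp [h] <;> exact Subtype.val_injective.ne h
    simp only [this, Finset.sum_add_distrib, List.length_cons, ih]
    rw [Finset.sum_ite_eq Finset.univ u (fun _ => 1)]
    simp

end FireLemmas

section Burn

variable {V E : Type} [Fintype V] [DecidableEq V] [Fintype E]
variable (tail head : E → V) (s : V)

/-- number of edges into `v` from within the cluster `A` -/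
def inA (A : Finset (Vne s)) (v : Vne s) : ℕ := ∑ u ∈ A, numEdges tail head u.1 v.1

/-- the burning property: every nonempty cluster has a vertex receiving at most
`τ v` edges from within the cluster -/
def BurnProp (τ : Vne s → ℕ) : Prop :=
  ∀ A : Finset (Vne s), A.Nonempty → ∃ v ∈ A, inA tail head s A v ≤ τ v

lemma sum_lap_row (A : Finset (Vne s)) (j : Vne s) :
    ∑ i ∈ A, reducedLaplacian tail head s i j =
      (if j ∈ A then (outdeg tail j.1 : ℤ) else 0) - (inA tail head s A j : ℤ) := by
  unfold reducedLaplacian inA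
  rw [Finset.sum_sub_distrib]
  push_cast
  congr 1
  rw [Finset.sum_ite_eq' A j (fun i => (outdeg tail i.1 : ℤ))]

lemma superstable_bound {σ : Vne s → ℕ} (hss : Superstable tail head σ) (v : Vne s) :
    σ v + 1 ≤ outdeg tail v.1 := by
  have h := hss {v} ⟨v, Finset.mem_singleton_self v⟩
  rw [ClusterAllowed] at h
  push_neg at h
  obtain ⟨j, hj⟩ := h
  rw [sum_lap_row] at hj
  by_cases hjv : j ∈ ({v} : Finset (Vne s))
  · rw [Finset.mem_singleton] at hjv
    subst hjv
    rw [if_pos (Finset.mem_singleton_self j)] at hj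
    have hnn : (0 : ℤ) ≤ (inA tail head s {j} j : ℤ) := Int.natCast_nonneg _
    have := hj
    omega
  · rw [if_neg hjv] at hj
    have hnn : (0 : ℤ) ≤ (inA tail head s {v} j : ℤ) := Int.natCast_nonneg _
    have hσ : (0 : ℤ) ≤ (σ j : ℤ) := Int.natCast_nonneg _
    omega

lemma superstable_iff_burn {σ τ : Vne s → ℕ}
    (hrel : ∀ v : Vne s, σ v + τ v + 1 = outdeg tail v.1) :
    Superstable tail head σ ↔ BurnProp tail head s τ := by
  constructor
  · intro hss A hA
    have h := hss A hA
    rw [ClusterAllowed] at h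
    push_neg at h
    obtain ⟨j, hj⟩ := h
    rw [sum_lap_row] at hj
    by_cases hjA : j ∈ A
    · refine ⟨j, hjA, ?_⟩
      rw [if_pos hjA] at hj
      have := hrel j
      omega
    · exfalso
      rw [if_neg hjA] at hj
      have hnn : (0 : ℤ) ≤ (inA tail head s A j : ℤ) := Int.natCast_nonneg _
      have hσ : (0 : ℤ) ≤ (σ j : ℤ) := Int.natCast_nonneg _
      omega
  · intro hB A hA hall
    obtain ⟨v, hvA, hv⟩ := hB A hA
    have h := hall v
    rw [sum_lap_row, if_pos hvA] at h
    have := hrel v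
    omega

end Burn

section Schedule

variable {V E : Type} [Fintype V] [DecidableEq V] [Fintype E]
variable {tail head : E → V} {s : V}

/-- the schedule lemma: from `τ + Δ'ᵀ x` one can legally fire down to `τ`,
provided `τ` has the burning property -/
lemma schedule (hsink : outdeg tail s = 0)
    (heul : ∀ v : V, v ≠ s → indeg head v ≤ outdeg tail v)
    {τ : Vne s → ℕ} (hB : BurnProp tail head s τ) :
    ∀ (n : ℕ) (x : Vne s → ℕ) (γ : Vne s → ℕ), (∑ v : Vne s, x v = n) →
    (∀ w : Vne s, (γ w : ℤ) =
      (τ w : ℤ) + ∑ v : Vne s, (x v : ℤ) * reducedLaplacian tail head s v w) →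
    ∃ l, Legal tail head γ l ∧ fireList tail head γ l = τ := by
  intro n
  induction n using Nat.strong_induction_on with
  | _ n ih =>
    intro x γ hsum hid
    rcases Nat.eq_zero_or_pos n with hn | hn
    · subst hn
      have hx : ∀ v, x v = 0 := by
        intro v
        have := Finset.sum_eq_zero_iff.mp hsum v (Finset.mem_univ v)
        exact this
      refine ⟨[], trivial, funext fun w => ?_⟩
      have := hid w
      simp only [hx, Nat.cast_zero, zero_mul, Finset.sum_const_zero, add_zero] at this
      exact_mod_cast this
    · -- pick a vertex of maximal remaining count with the burning property
      have hne : (Finset.univ : Finset (Vne s)).Nonempty := by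
        by_contra hcon
        rw [Finset.not_nonempty_iff_eq_empty] at hcon
        rw [hcon, Finset.sum_empty] at hsum
        omega
      obtain ⟨vm, -, hvm⟩ := Finset.exists_max_image Finset.univ x hne
      set M := x vm with hM
      have hM1 : 1 ≤ M := by
        by_contra hcon
        push_neg at hcon
        have : ∀ v ∈ Finset.univ, x v = 0 := fun v _ => by
          have := hvm v (Finset.mem_univ v); omega
        rw [Finset.sum_congr rfl this] at hsum
        simp at hsum
        omega
      set A : Finset (Vne s) := Finset.univ.filter (fun u => x u = M) with hA
      have hAne : A.Nonempty := ⟨vm, by simp [hA, hM]⟩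
      obtain ⟨v, hvA, hvτ⟩ := hB A hAne
      have hxv : x v = M := (Finset.mem_filter.mp hvA).2
      -- v is active in γ
      have hkey : (outdeg tail v.1 : ℤ) ≤ (γ v : ℤ) := by
        rw [hid v]
        have e1 : ∑ u : Vne s, (x u : ℤ) * reducedLaplacian tail head s u v
            = (x v : ℤ) * (outdeg tail v.1 : ℤ) -
              ∑ u : Vne s, (x u : ℤ) * (numEdges tail head u.1 v.1 : ℤ) := by
          unfold reducedLaplacian
          simp only [mul_sub]
          rw [Finset.sum_sub_distrib]
          congr 1
          simp only [mul_ite, mul_zero]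
          rw [Finset.sum_ite_eq' Finset.univ v (fun u => (x u : ℤ) * (outdeg tail u.1 : ℤ))]
          simp
        have split := Finset.sum_filter_add_sum_filter_not Finset.univ (fun u => x u = M)
          (fun u => (x u : ℤ) * (numEdges tail head u.1 v.1 : ℤ))
        have e2 : ∑ u ∈ Finset.univ.filter (fun u => x u = M),
            (x u : ℤ) * (numEdges tail head u.1 v.1 : ℤ)
            = (M : ℤ) * (inA tail head s A v : ℤ) := by
          rw [inA]
          push_cast
          rw [Finset.mul_sum]
          apply Finset.sum_congr rfl
          intro u hu
          rw [(Finset.mem_filter.mp hu).2]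
        have e3 : ∑ u ∈ Finset.univ.filter (fun u => ¬ x u = M),
            (x u : ℤ) * (numEdges tail head u.1 v.1 : ℤ)
            ≤ ((M : ℤ) - 1) * ∑ u ∈ Finset.univ.filter (fun u => ¬ x u = M),
                (numEdges tail head u.1 v.1 : ℤ) := by
          rw [Finset.mul_sum]
          apply Finset.sum_le_sum
          intro u hu
          have h1 : x u ≤ M := hvm u (Finset.mem_univ u)
          have h2 : ¬ x u = M := (Finset.mem_filter.mp hu).2
          have h3 : (x u : ℤ) ≤ (M : ℤ) - 1 := by
            have : x u + 1 ≤ M := by omega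
            push_cast at this ⊢
            omega
          exact mul_le_mul_of_nonneg_right h3 (Int.natCast_nonneg _)
        have e4 : (inA tail head s A v : ℤ) +
            ∑ u ∈ Finset.univ.filter (fun u => ¬ x u = M),
              (numEdges tail head u.1 v.1 : ℤ) = (indeg head v.1 : ℤ) := by
          have hsplit := Finset.sum_filter_add_sum_filter_not Finset.univ (fun u => x u = M)
            (fun u => (numEdges tail head u.1 v.1 : ℤ))
          have hindeg : ((indeg head v.1 : ℕ) : ℤ) =
              ∑ u : Vne s, (numEdges tail head u.1 v.1 : ℤ) := by
            rw [← sum_numEdges_eq_indeg tail head s hsink v.1]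
            push_cast
            rfl
          rw [hindeg, ← hsplit]
          congr 1
          rw [inA, hA]
          push_cast
          rfl
        have e5 : ((M : ℤ) - 1) * (indeg head v.1 : ℤ)
            ≤ ((M : ℤ) - 1) * (outdeg tail v.1 : ℤ) := by
          apply mul_le_mul_of_nonneg_left
          · exact_mod_cast heul v.1 v.2
          · have : (1 : ℤ) ≤ (M : ℤ) := by exact_mod_cast hM1
            omega
        have e6 : (inA tail head s A v : ℤ) ≤ (τ v : ℤ) := by exact_mod_cast hvτ
        have e7 : (M : ℤ) * (inA tail head s A v : ℤ) +
            (M : ℤ) * ∑ u ∈ Finset.univ.filter (fun u => ¬ x u = M),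
              (numEdges tail head u.1 v.1 : ℤ) = (M : ℤ) * (indeg head v.1 : ℤ) := by
          rw [← mul_add, e4]
        rw [e1, hxv]
        linarith [split, e2, e3, e4, e5, e6, e7]
      have hact : Active tail γ v := by
        rw [Active]
        exact_mod_cast hkey
      -- fire v and recurse
      set x' : Vne s → ℕ := fun u => if u = v then x u - 1 else x u with hx'
      have hx'sum : ∑ u : Vne s, x' u = n - 1 := by
        have h1 : x' v + ∑ u ∈ Finset.univ.erase v, x' u = ∑ u : Vne s, x' u :=
          Finset.add_sum_erase _ _ (Finset.mem_univ v)
        have h2 : x v + ∑ u ∈ Finset.univ.erase v, x u = ∑ u : Vne s, x u :=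
          Finset.add_sum_erase _ _ (Finset.mem_univ v)
        have h3 : ∑ u ∈ Finset.univ.erase v, x' u = ∑ u ∈ Finset.univ.erase v, x u := by
          apply Finset.sum_congr rfl
          intro u hu
          have : u ≠ v := (Finset.mem_erase.mp hu).1
          simp [hx', this]
        have h4 : x' v = x v - 1 := by simp [hx']
        rw [hsum] at h2
        rw [h3] at h1
        omega
      have hid' : ∀ w : Vne s, ((fire tail head γ v w : ℤ)) =
          (τ w : ℤ) + ∑ u : Vne s, (x' u : ℤ) * reducedLaplacian tail head s u w := by
        intro w
        rw [fire_int tail head hact w, hid w]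
        have hcast : ∀ u : Vne s, (x' u : ℤ) = (x u : ℤ) - if u = v then 1 else 0 := by
          intro u
          by_cases hu : u = v
          · subst hu
            simp only [hx', if_pos rfl]
            have : 1 ≤ x u := by rw [hxv] at *; omega
            push_cast [Nat.cast_sub this]
            simp
          · simp [hx', hu]
        simp only [hcast, sub_mul, Finset.sum_sub_distrib, ite_mul, one_mul, zero_mul]
        rw [Finset.sum_ite_eq' Finset.univ v (fun u => reducedLaplacian tail head s u w)]
        simp only [Finset.mem_univ, if_pos]
        ring
      obtain ⟨l, hleg, hend⟩ := ih (n - 1) (by omega) x' (fire tail head γ v) hx'sum hid'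
      exact ⟨v :: l, ⟨hact, hleg⟩, hend⟩

end Schedule

section Termination

variable {V E : Type} [Fintype V] [DecidableEq V] [Fintype E]

/-- reachability to the sink in at most `n` steps -/
def reachN (tail head : E → V) (s : V) : ℕ → V → Prop
  | 0, v => v = s
  | n+1, v => v = s ∨ ∃ e, tail e = v ∧ reachN tail head s n (head e)

variable {tail head : E → V} {s : V}

lemma reachN_exists {v : V}
    (h : Relation.ReflTransGen (fun a b => ∃ e, tail e = a ∧ head e = b) v s) :
    ∃ n, reachN tail head s n v := by
  induction h using Relation.ReflTransGen.head_induction_on with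
  | refl => exact ⟨0, rfl⟩
  | head hr _ ih =>
    obtain ⟨e, he1, he2⟩ := hr
    obtain ⟨n, hn⟩ := ih
    exact ⟨n + 1, Or.inr ⟨e, he1, by rw [he2]; exact hn⟩⟩

/-- the per-row column sum of the reduced Laplacian is the number of edges to the sink -/
lemma sum_lap_col (hsink : outdeg tail s = 0) (v : Vne s) :
    ∑ w : Vne s, reducedLaplacian tail head s v w = (numEdges tail head v.1 s : ℤ) := by
  unfold reducedLaplacian
  rw [Finset.sum_sub_distrib]
  rw [Finset.sum_ite_eq Finset.univ v (fun _ => (outdeg tail v.1 : ℤ))]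
  simp only [Finset.mem_univ, if_pos]
  have hout : numEdges tail head v.1 s + ∑ w : Vne s, numEdges tail head v.1 w.1
      = outdeg tail v.1 := by
    rw [← sum_numEdges_eq_outdeg tail head v.1,
      ← Finset.sum_erase_add Finset.univ _ (Finset.mem_univ s), add_comm]
    congr 1
    exact (Finset.sum_subtype (Finset.univ.erase s)
      (fun x => by simp [Finset.mem_erase]) (fun w => numEdges tail head v.1 w)).symm
  have := congrArg (Nat.cast (R := ℤ)) hout
  push_cast at this ⊢
  omega

/-- conservation: chips only leave through the sink -/
lemma sum_fireList (hsink : outdeg tail s = 0) {γ : Vne s → ℕ} {l : List (Vne s)}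
    (hl : Legal tail head γ l) :
    (∑ w : Vne s, (fireList tail head γ l w : ℤ)) +
      ∑ v : Vne s, (l.count v : ℤ) * (numEdges tail head v.1 s : ℤ)
      = ∑ w : Vne s, (γ w : ℤ) := by
  have h1 : ∀ w : Vne s, ((fireList tail head γ l w : ℤ)) =
      (γ w : ℤ) - ∑ v : Vne s, (l.count v : ℤ) * reducedLaplacian tail head s v w :=
    fireList_int tail head hl
  have h2 : ∑ w : Vne s, ∑ v : Vne s, (l.count v : ℤ) * reducedLaplacian tail head s v w
      = ∑ v : Vne s, (l.count v : ℤ) * (numEdges tail head v.1 s : ℤ) := by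
    rw [Finset.sum_comm]
    apply Finset.sum_congr rfl
    intro v _
    rw [← Finset.mul_sum, sum_lap_col hsink v]
  rw [Finset.sum_congr rfl (fun w _ => h1 w), Finset.sum_sub_distrib, h2]
  ring

/-- the iterated firing bound function -/
def phi (N D : ℕ) : ℕ → ℕ
  | 0 => N
  | k+1 => N + (D+1) * phi N D k

lemma phi_mono (N D : ℕ) : Monotone (phi N D) := by
  apply monotone_nat_of_le_succ
  intro k
  induction k with
  | zero =>
    show phi N D 0 ≤ phi N D 1
    rw [phi, phi]
    exact Nat.le_add_right N _
  | succ k ih =>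
    show phi N D (k+1) ≤ phi N D (k+2)
    rw [phi, phi]
    have : phi N D k ≤ phi N D (k+1) := ih
    nlinarith

/-- every legal firing sequence has bounded length -/
lemma legal_length_bound (hsink : outdeg tail s = 0)
    (hglobal : ∀ v : V,
      Relation.ReflTransGen (fun a b => ∃ e, tail e = a ∧ head e = b) v s)
    (γ : Vne s → ℕ) :
    ∃ L, ∀ l : List (Vne s), Legal tail head γ l → l.length ≤ L := by
  classical
  set N : ℕ := ∑ w : Vne s, γ w with hN
  set D : ℕ := Fintype.card E with hD
  have hdle : ∀ v : V, outdeg tail v ≤ D := by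
    intro v
    rw [hD, outdeg]
    exact le_trans (Finset.card_filter_le _ _) (le_of_eq (Finset.card_univ))
  have hex : ∀ v : V, ∃ n, reachN tail head s n v := fun v => reachN_exists (hglobal v)
  haveI : ∀ v : V, DecidablePred (fun n => reachN tail head s n v) :=
    fun v n => Classical.dec _
  set dist : V → ℕ := fun v => Nat.find (hex v) with hdist
  refine ⟨∑ v : Vne s, phi N D (dist v.1), ?_⟩
  intro l hl
  -- basic facts about this legal sequence
  have hend : ∀ w : Vne s, (0 : ℤ) ≤ (fireList tail head γ l w : ℤ) :=
    fun w => Int.natCast_nonneg _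
  have hsum := sum_fireList hsink hl
  have hterm_nonneg : ∀ v : Vne s, (0:ℤ) ≤ (l.count v : ℤ) * (numEdges tail head v.1 s : ℤ) :=
    fun v => mul_nonneg (Int.natCast_nonneg _) (Int.natCast_nonneg _)
  have hsink_bound : ∀ v : Vne s,
      (l.count v : ℤ) * (numEdges tail head v.1 s : ℤ) ≤ (N : ℤ) := by
    intro v
    have h1 : ∑ w : Vne s, (fireList tail head γ l w : ℤ) ≥ 0 :=
      Finset.sum_nonneg (fun w _ => hend w)
    have h2 : (l.count v : ℤ) * (numEdges tail head v.1 s : ℤ) ≤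
        ∑ u : Vne s, (l.count u : ℤ) * (numEdges tail head u.1 s : ℤ) :=
      Finset.single_le_sum (fun u _ => hterm_nonneg u) (Finset.mem_univ v)
    have h3 : ((N:ℕ) : ℤ) = ∑ w : Vne s, (γ w : ℤ) := by rw [hN]; push_cast; rfl
    omega
  have hend_bound : ∀ w : Vne s, (fireList tail head γ l w : ℤ) ≤ (N : ℤ) := by
    intro w
    have h1 : (fireList tail head γ l w : ℤ) ≤ ∑ u : Vne s, (fireList tail head γ l u : ℤ) :=
      Finset.single_le_sum (fun u _ => hend u) (Finset.mem_univ w)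
    have h2 : ∑ u : Vne s, (l.count u : ℤ) * (numEdges tail head u.1 s : ℤ) ≥ 0 :=
      Finset.sum_nonneg (fun u _ => hterm_nonneg u)
    have h3 : ((N:ℕ) : ℤ) = ∑ u : Vne s, (γ u : ℤ) := by rw [hN]; push_cast; rfl
    omega
  have hinflow : ∀ u : Vne s, ∑ v : Vne s, (l.count v : ℤ) * (numEdges tail head v.1 u.1 : ℤ)
      = (fireList tail head γ l u : ℤ) - (γ u : ℤ)
        + (l.count u : ℤ) * (outdeg tail u.1 : ℤ) := by
    intro u
    have h1 := fireList_int tail head hl u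
    have h2 : ∑ v : Vne s, (l.count v : ℤ) * reducedLaplacian tail head s v u
        = (l.count u : ℤ) * (outdeg tail u.1 : ℤ)
          - ∑ v : Vne s, (l.count v : ℤ) * (numEdges tail head v.1 u.1 : ℤ) := by
      unfold reducedLaplacian
      simp only [mul_sub]
      rw [Finset.sum_sub_distrib]
      congr 1
      simp only [mul_ite, mul_zero]
      rw [Finset.sum_ite_eq' Finset.univ u (fun v => (l.count v : ℤ) * (outdeg tail v.1 : ℤ))]
      simp
    rw [h2] at h1
    omega
  -- the main per-vertex count bound, by induction on distance to the sink
  have main : ∀ k : ℕ, ∀ u : Vne s, dist u.1 ≤ k → (l.count u : ℤ) ≤ (phi N D k : ℤ) := by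
    intro k
    induction k with
    | zero =>
      intro u hu
      exfalso
      have h0 : reachN tail head s (dist u.1) u.1 := Nat.find_spec (hex u.1)
      rw [Nat.le_zero] at hu
      rw [hu] at h0
      exact u.2 h0
    | succ k ih =>
      intro u hu
      have h0 : reachN tail head s (dist u.1) u.1 := Nat.find_spec (hex u.1)
      have hd1 : dist u.1 ≠ 0 := by
        intro hcon
        rw [hcon] at h0
        exact u.2 h0
      obtain ⟨m, hm⟩ : ∃ m, dist u.1 = m + 1 := ⟨dist u.1 - 1, by omega⟩
      rw [hm] at h0
      rcases h0 with h0 | ⟨e, he1, he2⟩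
      · exact absurd h0 u.2
      · by_cases hws : head e = s
        · -- u has an edge straight to the sink
          have ha : 1 ≤ numEdges tail head u.1 s := by
            rw [numEdges]
            refine Finset.card_pos.mpr ⟨e, ?_⟩
            simp [he1, hws]
          have h2 := hsink_bound u
          have h3 : (l.count u : ℤ) ≤ (l.count u : ℤ) * (numEdges tail head u.1 s : ℤ) := by
            nlinarith [Int.natCast_nonneg (l.count u),
              (by exact_mod_cast ha : (1:ℤ) ≤ (numEdges tail head u.1 s : ℤ))]
          have h4 : (N : ℤ) ≤ (phi N D (k+1) : ℤ) := by
            have := phi_mono N D (Nat.zero_le (k+1))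
            rw [(by rfl : phi N D 0 = N)] at this
            exact_mod_cast this
          omega
        · -- u has an edge to a non-sink vertex closer to the sink
          set w : Vne s := ⟨head e, hws⟩ with hw
          have hdw : dist (head e) ≤ m := Nat.find_min' (hex (head e)) he2
          have hcw : (l.count w : ℤ) ≤ (phi N D k : ℤ) := ih w (by
            have hq : dist w.1 = dist (head e) := rfl
            omega)
          have ha : 1 ≤ numEdges tail head u.1 w.1 := by
            rw [numEdges]
            refine Finset.card_pos.mpr ⟨e, ?_⟩
            simp [he1, hw]
          have h3 : (l.count u : ℤ) ≤ (l.count u : ℤ) * (numEdges tail head u.1 w.1 : ℤ) := by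
            nlinarith [Int.natCast_nonneg (l.count u),
              (by exact_mod_cast ha : (1:ℤ) ≤ (numEdges tail head u.1 w.1 : ℤ))]

          have h4 : (l.count u : ℤ) * (numEdges tail head u.1 w.1 : ℤ) ≤
              ∑ v : Vne s, (l.count v : ℤ) * (numEdges tail head v.1 w.1 : ℤ) :=
            Finset.single_le_sum
              (fun v _ => mul_nonneg (Int.natCast_nonneg _) (Int.natCast_nonneg _))
              (Finset.mem_univ u)
          have h5 := hinflow w
          have h6 := hend_bound w
          have h7 : (0:ℤ) ≤ (γ w : ℤ) := Int.natCast_nonneg _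
          have h8 : (l.count w : ℤ) * (outdeg tail w.1 : ℤ) ≤ (phi N D k : ℤ) * (D : ℤ) := by
            have hd := hdle w.1
            have : (outdeg tail w.1 : ℤ) ≤ (D : ℤ) := by exact_mod_cast hd
            nlinarith [Int.natCast_nonneg (l.count w),
              Int.natCast_nonneg (outdeg tail w.1),
              Int.natCast_nonneg (phi N D k)]
          have h9 : ((phi N D (k+1) : ℕ) : ℤ) = (N : ℤ) + ((D:ℤ)+1) * (phi N D k : ℤ) := by
            rw [(by rfl : phi N D (k+1) = N + (D+1) * phi N D k)]
            push_cast
            ring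
          have h10 : (0:ℤ) ≤ (phi N D k : ℤ) := Int.natCast_nonneg _
          have h11 : (phi N D k : ℤ) * (D : ℤ) ≤ ((D:ℤ)+1) * (phi N D k : ℤ) := by nlinarith
          omega
  -- sum up
  have hlen : (l.length : ℤ) ≤ ((∑ v : Vne s, phi N D (dist v.1) : ℕ) : ℤ) := by
    rw [length_eq_sum_count]
    push_cast
    apply Finset.sum_le_sum
    intro v _
    exact main (dist v.1) v le_rfl
  exact_mod_cast hlen

/-- stabilization: from any configuration some legal sequence reaches a stable one -/
lemma exists_stabilization (hsink : outdeg tail s = 0)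
    (hglobal : ∀ v : V,
      Relation.ReflTransGen (fun a b => ∃ e, tail e = a ∧ head e = b) v s)
    (γ : Vne s → ℕ) :
    ∃ l, Legal tail head γ l ∧ Stable tail (fireList tail head γ l) := by
  classical
  obtain ⟨L, hL⟩ := legal_length_bound hsink hglobal γ
  clear hsink hglobal
  induction L generalizing γ with
  | zero =>
    by_cases hst : Stable tail γ
    · exact ⟨[], trivial, hst⟩
    · exfalso
      rw [Stable] at hst
      push_neg at hst
      obtain ⟨v, hv⟩ := hst
      have : Legal tail head γ [v] := ⟨hv, trivial⟩
      have := hL [v] this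
      simp at this
  | succ L ih =>
    by_cases hst : Stable tail γ
    · exact ⟨[], trivial, hst⟩
    · rw [Stable] at hst
      push_neg at hst
      obtain ⟨v, hv⟩ := hst
      have hv' : Active tail γ v := hv
      obtain ⟨l, hleg, hstab⟩ := ih (fire tail head γ v) (by
        intro l hll
        have := hL (v :: l) ⟨hv', hll⟩
        simp only [List.length_cons] at this
        omega)
      exact ⟨v :: l, ⟨hv', hleg⟩, hstab⟩

end Termination

section Final

variable {V E : Type} [Fintype V] [DecidableEq V] [Fintype E]
variable {tail head : E → V} {s : V}

lemma split_last {α : Type} [DecidableEq α] :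
    ∀ (l : List α) (A : Finset α), (∀ u ∈ A, u ∈ l) → A.Nonempty →
    ∃ (l₁ : List α) (v : α) (l₂ : List α),
      l = l₁ ++ v :: l₂ ∧ v ∈ A ∧ v ∉ l₂ ∧ ∀ u ∈ A, u ≠ v → u ∈ l₂ := by
  intro l
  induction l with
  | nil =>
    intro A hall hA
    obtain ⟨u, hu⟩ := hA
    exact absurd (hall u hu) List.not_mem_nil
  | cons w l ih =>
    intro A hall hA
    by_cases hall' : ∀ u ∈ A, u ∈ l
    · obtain ⟨l₁, v, l₂, heq, hv1, hv2, hv3⟩ := ih A hall' hA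
      exact ⟨w :: l₁, v, l₂, by rw [heq]; rfl, hv1, hv2, hv3⟩
    · push_neg at hall'
      obtain ⟨u, huA, hul⟩ := hall'
      have huw : u = w := by
        have := hall u huA
        rcases List.mem_cons.mp this with h | h
        · exact h
        · exact absurd h hul
      subst huw
      refine ⟨[], u, l, rfl, huA, hul, ?_⟩
      intro u' hu'A hu'ne
      rcases List.mem_cons.mp (hall u' hu'A) with h | h
      · exact absurd h hu'ne
      · exact h

/-- a recurrent configuration has the burning property -/
lemma recurrent_burn {τ : Vne s → ℕ} (hst : Stable tail τ)
    (hacc : Accessible tail head τ) : BurnProp tail head s τ := by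
  intro A hA
  obtain ⟨β, l, hleg, hend⟩ := hacc (fun v => outdeg tail v.1)
  set γ : Vne s → ℕ := fun v => outdeg tail v.1 + β v with hγ
  have hall : ∀ u ∈ A, u ∈ l := by
    intro u huA
    by_contra hcon
    have h1 := fireList_not_mem tail head (σ := γ) hcon
    rw [hend] at h1
    have h2 := hst u
    have : outdeg tail u.1 ≤ γ u := Nat.le_add_right _ _
    omega
  obtain ⟨l₁, v, l₂, heq, hvA, hvl₂, hother⟩ := split_last l A hall hA
  rw [heq] at hleg hend
  obtain ⟨hleg₁, hleg₂⟩ := legal_append tail head hleg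
  set σ' := fireList tail head γ l₁ with hσ'
  obtain ⟨hact, hleg₃⟩ := hleg₂
  have hend' : fireList tail head (fire tail head σ' v) l₂ = τ := by
    rw [fireList_append] at hend
    exact hend
  have h1 := fireList_not_mem tail head
    (σ := fire tail head σ' v) (l := l₂) (v := v) hvl₂
  rw [hend'] at h1
  have h2 : fire tail head σ' v v = σ' v + numEdges tail head v.1 v.1 - outdeg tail v.1 := by
    rw [fire, if_pos rfl]
  have hactv : outdeg tail v.1 ≤ σ' v := hact
  have h3 : numEdges tail head v.1 v.1 ≤ fire tail head σ' v v := by omega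
  -- the in-cluster edge count
  have h4 : inA tail head s A v =
      numEdges tail head v.1 v.1 + ∑ u ∈ A.erase v, numEdges tail head u.1 v.1 := by
    rw [inA, ← Finset.add_sum_erase A _ hvA]
  have h5 : ∑ u ∈ A.erase v, numEdges tail head u.1 v.1 ≤
      ∑ u : Vne s, l₂.count u * numEdges tail head u.1 v.1 := by
    calc ∑ u ∈ A.erase v, numEdges tail head u.1 v.1
        ≤ ∑ u ∈ A.erase v, l₂.count u * numEdges tail head u.1 v.1 := by
          apply Finset.sum_le_sum
          intro u hu
          have hu2 : u ∈ l₂ := hother u (Finset.mem_erase.mp hu).2 (Finset.mem_erase.mp hu).1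
          have : 1 ≤ l₂.count u := List.count_pos_iff.mpr hu2
          nlinarith
      _ ≤ ∑ u : Vne s, l₂.count u * numEdges tail head u.1 v.1 :=
          Finset.sum_le_sum_of_subset (Finset.subset_univ _)
  exact ⟨v, hvA, by omega⟩

/-- a stable configuration with the burning property is accessible -/
lemma burn_accessible (hsink : outdeg tail s = 0)
    (heul : ∀ v : V, v ≠ s → indeg head v ≤ outdeg tail v)
    (hglobal : ∀ v : V,
      Relation.ReflTransGen (fun a b => ∃ e, tail e = a ∧ head e = b) v s)
    {τ : Vne s → ℕ} (hst : Stable tail τ) (hB : BurnProp tail head s τ) :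
    Accessible tail head τ := by
  intro ζ
  obtain ⟨l, hleg, hstab⟩ := exists_stabilization hsink hglobal
    (fun v => ζ v + outdeg tail v.1)
  set γ0 : Vne s → ℕ := fun v => ζ v + outdeg tail v.1 with hγ0
  set S : Vne s → ℤ :=
    fun w => ∑ v : Vne s, (l.count v : ℤ) * reducedLaplacian tail head s v w with hS
  have hSw : ∀ w : Vne s, (ζ w : ℤ) + 1 ≤ S w := by
    intro w
    have h1 := fireList_int tail head hleg w
    have h2 := hstab w
    have h3 : (fireList tail head γ0 l w : ℤ) < (outdeg tail w.1 : ℤ) := by exact_mod_cast h2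
    have h4 : (γ0 w : ℤ) = (ζ w : ℤ) + (outdeg tail w.1 : ℤ) := by push_cast; rfl
    have hb : S w = ∑ v : Vne s, (l.count v : ℤ) * reducedLaplacian tail head s v w := rfl
    rw [hb]
    omega
  set γ' : Vne s → ℕ := fun w => τ w + (S w).toNat with hγ'
  have hid : ∀ w : Vne s, (γ' w : ℤ) =
      (τ w : ℤ) + ∑ v : Vne s, (l.count v : ℤ) * reducedLaplacian tail head s v w := by
    intro w
    have h0 : (0:ℤ) ≤ S w := le_trans (by positivity) (hSw w)
    rw [hγ']
    push_cast [Int.toNat_of_nonneg h0]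
    rfl
  obtain ⟨l', hleg', hend'⟩ := schedule hsink heul hB (∑ v : Vne s, l.count v)
    (fun v => l.count v) γ' rfl hid
  have hζγ' : ∀ w, ζ w ≤ γ' w := by
    intro w
    have h1 := hSw w
    have h2 : ((S w).toNat : ℤ) = S w := Int.toNat_of_nonneg (le_trans (by positivity) h1)
    have : (ζ w : ℤ) ≤ ((S w).toNat : ℤ) := by omega
    have h3 : ζ w ≤ (S w).toNat := by exact_mod_cast this
    calc ζ w ≤ (S w).toNat := h3
      _ ≤ τ w + (S w).toNat := Nat.le_add_left _ _
  refine ⟨fun w => γ' w - ζ w, l', ?_, ?_⟩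
  · have : (fun v => ζ v + (γ' v - ζ v)) = γ' := by
      funext w
      have := hζγ' w
      omega
    rw [this]
    exact hleg'
  · have : (fun v => ζ v + (γ' v - ζ v)) = γ' := by
      funext w
      have := hζγ' w
      omega
    rw [this]
    exact hend'

end Final

end ChipAux

/-- **Superstable = δ − 1 − recurrent.**  Let `G` be an Eulerian digraph with sink.
A chip configuration `σ` is superstable if and only if `δ − 1 − σ` is a (nonnegative)
recurrent chip configuration, where `δ(v) = d_v` and `1` is the all-ones
configuration; i.e. iff there is a recurrent configuration `τ` with
`σ(v) + τ(v) + 1 = d_v` for every non-sink vertex `v`. -/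
theorem superstable_iff_recurrent_complement
    {V E : Type} [Fintype V] [DecidableEq V] [Fintype E]
    (tail head : E → V)
    (s : V) (hs : outdeg tail s = 0)
    (heul : ∀ v : V, v ≠ s → indeg head v ≤ outdeg tail v)
    (hglobal : ∀ v : V,
      Relation.ReflTransGen (fun a b => ∃ e, tail e = a ∧ head e = b) v s)
    (σ : Vne s → ℕ) :
    Superstable tail head σ ↔
      ∃ τ : Vne s → ℕ, Recurrent tail head τ ∧
        ∀ v : Vne s, σ v + τ v + 1 = outdeg tail v.1 := by
  constructor
  · intro hss
    have hbd : ∀ v : Vne s, σ v + 1 ≤ outdeg tail v.1 :=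
      ChipAux.superstable_bound tail head s hss
    set τ : Vne s → ℕ := fun v => outdeg tail v.1 - (σ v + 1) with hτ
    have hrel : ∀ v : Vne s, σ v + τ v + 1 = outdeg tail v.1 := by
      intro v
      have := hbd v
      simp only [hτ]
      omega
    have hB : ChipAux.BurnProp tail head s τ :=
      (ChipAux.superstable_iff_burn tail head s hrel).mp hss
    have hst : Stable tail τ := by
      intro v
      have := hbd v
      simp only [hτ]
      omega
    exact ⟨τ, ⟨hst, ChipAux.burn_accessible hs heul hglobal hst hB⟩, hrel⟩
  · rintro ⟨τ, ⟨hst, hacc⟩, hrel⟩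
    exact (ChipAux.superstable_iff_burn tail head s hrel).mpr
      (ChipAux.recurrent_burn hst hacc)
end
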